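/- arXiv:1309.7409 — 6 statements merged into one kernel-verified Lean document; each statement's English description precedes it below -/
import Mathlib

section
/- Let X be a set and c : X × X × X → ℕ a reduced cocycle, i.e. c satisfies the cocycle condition c(X,Y,Z) - c(W,Y,Z) + c(W,X,Z) - c(W,X,Y) = 0 for all W,X,Y,Z and c(X,X,Y) = 0 = c(X,Y,Y) for all X,Y. Then the relation X ∼ Y defined by c(X,Y,X) = 0 is an equivalence relation on X. -/
/-- A reduced cocycle `c : X³ → ℕ` gives an equivalence relation `x ∼ y ↔ c(x,y,x) = 0`. -/
theorem stmt0 {X : Type*} (c : X → X → X → ℕ)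
    (hcoc : ∀ w x y z : X,
      (c x y z : ℤ) - (c w y z : ℤ) + (c w x z : ℤ) - (c w x y : ℤ) = 0)
    (hred : ∀ x y : X, c x x y = 0 ∧ c x y y = 0) :
    Equivalence (fun x y : X => c x y x = 0) := by
  constructor
  · intro x
    exact (hred x x).1
  · intro x y h
    have h1 := hcoc x y x y
    have h2 := (hred x y).1
    have h3 := (hred x y).2
    omega
  · intro x y z hxy hyz
    have h1 := hcoc x y z y
    have h2 := (hred x y).2
    have h3 := hcoc x z y x
    omega
end

section
/- Let R be a discrete valuation ring with uniformizer u, X a set, and c a reduced cocycle on X. Define a category P(X) with object set X, with Hom(x,y) = R for all x,y, identity 1 ∈ R, and composition of g ∈ Hom(y,z) and f ∈ Hom(x,y) given by g ∘ f = u^{c(x,y,z)} · g · f ∈ Hom(x,z). Then composition is associative and unital, so P(X) is a category. -/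
/-- For a DVR `(R, u)` and a reduced cocycle `c` on a set `X`, the composition rule
`g ∘ f = u^{c(x,y,z)} · g · f` (for `f : x → y`, `g : y → z`, identified with elements of `R`)
is unital and associative, so it defines a category `P(X)`. -/
theorem stmt2 {X : Type*} (R : Type*) [CommRing R] [IsDomain R]
    [IsDiscreteValuationRing R] (u : R) (hu : Irreducible u)
    (c : X → X → X → ℕ)
    (hcoc : ∀ w x y z : X,
      (c x y z : ℤ) - (c w y z : ℤ) + (c w x z : ℤ) - (c w x y : ℤ) = 0)
    (hred : ∀ x y : X, c x x y = 0 ∧ c x y y = 0) :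
    -- left identity: composing `f : x → y` with `1 ∈ Hom(y,y)`
    (∀ (x y : X) (f : R), u ^ c x y y * 1 * f = f) ∧
    -- right identity: composing `1 ∈ Hom(x,x)` with `f : x → y`
    (∀ (x y : X) (f : R), u ^ c x x y * f * 1 = f) ∧
    -- associativity: for `f : x → y`, `g : y → z`, `h : z → w`,
    -- `(h ∘ g) ∘ f = h ∘ (g ∘ f)`
    (∀ (x y z w : X) (f g h : R),
      u ^ c x y w * (u ^ c y z w * h * g) * f =
        u ^ c x z w * h * (u ^ c x y z * g * f)) := by
  refine ⟨fun x y f => by simp [(hred x y).2], fun x y f => by simp [(hred x x).2, (hred x y).1],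
    fun x y z w f g h => ?_⟩
  have key : c x y w + c y z w = c x z w + c x y z := by
    have := hcoc x y z w
    omega
  calc u ^ c x y w * (u ^ c y z w * h * g) * f
      = u ^ (c x y w + c y z w) * (h * g * f) := by ring
    _ = u ^ (c x z w + c x y z) * (h * g * f) := by rw [key]
    _ = u ^ c x z w * h * (u ^ c x y z * g * f) := by ring
end

section
/- Define two open arcs (intervals) I = (x,y) and J = (z,w) in the circle S¹_π = ℝ/πℤ (each of length < π) to be noncrossing if they are disjoint or one contains the other. Then the circle S¹_π cannot be covered by a (possibly infinite) collection of open arcs, each of length < π, which are pairwise noncrossing. -/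
/-- The open arc in the circle `S¹_π = ℝ/πℤ` which is the image of the interval `(x,y)`. -/
def Arc (x y : ℝ) : Set (AddCircle Real.pi) :=
  (fun t : ℝ => (QuotientAddGroup.mk t : AddCircle Real.pi)) '' Set.Ioo x y

lemma arc_open (x y : ℝ) : IsOpen (Arc x y) :=
  QuotientAddGroup.isOpenMap_coe _ isOpen_Ioo

lemma endpoint_not_mem {x y : ℝ} (h : y < x + Real.pi) :
    (QuotientAddGroup.mk x : AddCircle Real.pi) ∉ Arc x y := by
  rintro ⟨t, ⟨ht1, ht2⟩, ht⟩
  have hm : t - x ∈ AddSubgroup.zmultiples Real.pi :=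
    (QuotientAddGroup.eq_iff_sub_mem).1 ht
  obtain ⟨k, hk⟩ := AddSubgroup.mem_zmultiples_iff.1 hm
  have hk' : (k:ℝ) * Real.pi = t - x := by rw [← hk]; simp [zsmul_eq_mul]
  have h0 : (0:ℝ) < (k:ℝ) * Real.pi := by rw [hk']; linarith
  have hkpos : (0:ℝ) < (k:ℝ) := by
    rcases mul_pos_iff.mp h0 with ⟨h1,_⟩|⟨_,h2⟩
    · exact h1
    · nlinarith [Real.pi_pos]
  have hk1 : (1:ℝ) ≤ (k:ℝ) := by exact_mod_cast (by exact_mod_cast hkpos : (0:ℤ) < k)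
  nlinarith [Real.pi_pos]

lemma arc_ne_univ {x y : ℝ} (h : y < x + Real.pi) : Arc x y ≠ Set.univ := by
  intro hu
  exact endpoint_not_mem h (hu ▸ Set.mem_univ _)

/-- The circle `S¹_π` cannot be covered by a family of open arcs, each of length `< π`,
which are pairwise noncrossing (i.e. pairwise disjoint or nested). -/
theorem stmt8 (ι : Type*) (a b : ι → ℝ)
    (hab : ∀ i, a i < b i ∧ b i < a i + Real.pi)
    (hnc : ∀ i j,
      Disjoint (Arc (a i) (b i)) (Arc (a j) (b j)) ∨
      Arc (a i) (b i) ⊆ Arc (a j) (b j) ∨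
      Arc (a j) (b j) ⊆ Arc (a i) (b i)) :
    (⋃ i, Arc (a i) (b i)) ≠ Set.univ := by
  classical
  haveI : Fact (0 < Real.pi) := ⟨Real.pi_pos⟩
  intro hcov
  -- finite subcover by compactness
  obtain ⟨t, ht⟩ := isCompact_univ.elim_finite_subcover
    (fun i => Arc (a i) (b i)) (fun i => arc_open _ _) (by rw [hcov])
  -- the finite family of arcs, as a finset of sets
  set T : Finset (Set (AddCircle Real.pi)) := t.image (fun i => Arc (a i) (b i)) with hT
  have hTprop : ∀ A ∈ T, ∃ i, A = Arc (a i) (b i) := by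
    intro A hA
    obtain ⟨i, _, hi⟩ := Finset.mem_image.1 hA
    exact ⟨i, hi.symm⟩
  have hTnc : ∀ A ∈ T, ∀ B ∈ T, Disjoint A B ∨ A ⊆ B ∨ B ⊆ A := by
    intro A hA B hB
    obtain ⟨i, hi⟩ := hTprop A hA
    obtain ⟨j, hj⟩ := hTprop B hB
    rw [hi, hj]; exact hnc i j
  -- the maximal arcs
  set M : Finset (Set (AddCircle Real.pi)) :=
    T.filter (fun A => ∀ B ∈ T, ¬ A ⊂ B) with hM
  -- every point lies in some maximal arc
  have hMcov : ∀ p : AddCircle Real.pi, ∃ A ∈ M, p ∈ A := by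
    intro p
    obtain ⟨i, it, hpA⟩ := Set.mem_iUnion₂.1 (ht (Set.mem_univ p))
    have hAT : Arc (a i) (b i) ∈ T := Finset.mem_image.2 ⟨i, it, rfl⟩
    set F : Finset (Set (AddCircle Real.pi)) := T.filter (fun B => Arc (a i) (b i) ⊆ B) with hF
    have hAF : Arc (a i) (b i) ∈ F := Finset.mem_filter.2 ⟨hAT, subset_rfl⟩
    obtain ⟨m, hmF, hmax⟩ := F.exists_maximal ⟨_, hAF⟩
    obtain ⟨hmT, hsub⟩ := Finset.mem_filter.1 hmF
    refine ⟨m, Finset.mem_filter.2 ⟨hmT, ?_⟩, hsub hpA⟩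
    intro B hB hmB
    exact ssubset_irrefl m (hmB.trans_subset (hmax (Finset.mem_filter.2 ⟨hB, hsub.trans hmB.subset⟩) hmB.subset))
  -- distinct maximal arcs are disjoint
  have hMdisj : ∀ A ∈ M, ∀ B ∈ M, A ≠ B → Disjoint A B := by
    intro A hA B hB hne
    obtain ⟨hAT, hAmax⟩ := Finset.mem_filter.1 hA
    obtain ⟨hBT, hBmax⟩ := Finset.mem_filter.1 hB
    rcases hTnc A hAT B hBT with h | h | h
    · exact h
    · exact absurd (HasSubset.Subset.ssubset_of_ne h hne) (hAmax B hBT)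
    · exact absurd (HasSubset.Subset.ssubset_of_ne h hne.symm) (hBmax A hAT)
  -- pick one maximal arc through 0
  obtain ⟨A, hAM, hA0⟩ := hMcov 0
  have hAT : A ∈ T := (Finset.mem_filter.1 hAM).1
  obtain ⟨i, hAi⟩ := hTprop A hAT
  -- its complement is the union of the other maximal arcs, hence open
  have hcompl : Aᶜ = ⋃₀ {B : Set (AddCircle Real.pi) | B ∈ M ∧ B ≠ A} := by
    ext p
    constructor
    · intro hp
      obtain ⟨B, hBM, hpB⟩ := hMcov p
      refine ⟨B, ⟨hBM, ?_⟩, hpB⟩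
      rintro rfl
      exact hp hpB
    · rintro ⟨B, ⟨hBM, hne⟩, hpB⟩
      exact fun hpA => (hMdisj B hBM A hAM hne).le_bot ⟨hpB, hpA⟩
  have hAopen : IsOpen A := hAi ▸ arc_open _ _
  have hAclosed : IsClosed A := by
    rw [← isOpen_compl_iff, hcompl]
    refine isOpen_sUnion ?_
    rintro B ⟨hBM, -⟩
    obtain ⟨j, hj⟩ := hTprop B (Finset.mem_filter.1 hBM).1
    exact hj ▸ arc_open _ _
  rcases isClopen_iff.1 ⟨hAclosed, hAopen⟩ with h | h
  · exact absurd (h ▸ hA0) (Set.notMem_empty _)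
  · exact arc_ne_univ (hab i).2 (hAi ▸ h)
end

section
/- Let I = (x,y) ⊂ ℝ with x < y. The set L₀ = { ((x + (k-1)(y-x)/2ⁿ, x + k(y-x)/2ⁿ)) : n ≥ 0, 1 ≤ k ≤ 2ⁿ } of dyadic subintervals of I is a pairwise noncrossing family of open subintervals of I (any two members are disjoint or one contains the other), and it is maximal: any open interval (a,b) ⊆ (x,y) which is noncrossing with every member of L₀ already belongs to L₀. -/
namespace Stmt10Aux

noncomputable def e (x y : ℝ) (n : ℕ) (k : ℤ) : ℝ := x + k * (y - x) / 2 ^ n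

variable {x y : ℝ}

lemma e_lt_e (hxy : x < y) {n m : ℕ} {k j : ℤ} :
    e x y n k < e x y m j ↔ k * 2 ^ m < j * 2 ^ n := by
  unfold e
  rw [add_lt_add_iff_left, div_lt_div_iff₀ (by positivity) (by positivity),
    mul_right_comm, mul_right_comm (j : ℝ), mul_lt_mul_iff_of_pos_right (by linarith)]
  constructor <;> intro h <;> exact_mod_cast h

lemma e_le_e (hxy : x < y) {n m : ℕ} {k j : ℤ} :
    e x y n k ≤ e x y m j ↔ k * 2 ^ m ≤ j * 2 ^ n := by
  rw [← not_lt, ← not_lt, e_lt_e hxy]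

lemma lt_e_iff (hxy : x < y) {n : ℕ} {m : ℤ} {c : ℝ} :
    c < e x y n m ↔ (c - x) * 2 ^ n < m * (y - x) := by
  unfold e
  rw [← sub_lt_iff_lt_add', lt_div_iff₀ (by positivity : (0:ℝ) < 2 ^ n)]

lemma e_lt_iff (hxy : x < y) {n : ℕ} {m : ℤ} {c : ℝ} :
    e x y n m < c ↔ m * (y - x) < (c - x) * 2 ^ n := by
  unfold e
  rw [← lt_sub_iff_add_lt', div_lt_iff₀ (by positivity : (0:ℝ) < 2 ^ n)]

lemma e_double (x y : ℝ) (n : ℕ) (k : ℤ) : e x y (n + 1) (2 * k) = e x y n k := by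
  unfold e
  push_cast
  rw [pow_succ]
  field_simp

lemma e_self_lt (hxy : x < y) {n : ℕ} {k j : ℤ} (h : k < j) : e x y n k < e x y n j := by
  rw [e_lt_e hxy]
  have := pow_pos (show (0:ℤ) < 2 by norm_num) n
  nlinarith

lemma aux2 (hxy : x < y) {n m : ℕ} (hnm : n ≤ m) (k j : ℤ) :
    Disjoint (Set.Ioo (e x y n (k-1)) (e x y n k)) (Set.Ioo (e x y m (j-1)) (e x y m j)) ∨
    Set.Ioo (e x y n (k-1)) (e x y n k) ⊆ Set.Ioo (e x y m (j-1)) (e x y m j) ∨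
    Set.Ioo (e x y m (j-1)) (e x y m j) ⊆ Set.Ioo (e x y n (k-1)) (e x y n k) := by
  obtain ⟨t, rfl⟩ := Nat.exists_eq_add_of_le hnm
  have hp : (0:ℤ) < 2 ^ t := by positivity
  have h2n : (0:ℤ) < 2 ^ n := by positivity
  have key : j ≤ (k-1) * 2^t ∨ k * 2^t ≤ j - 1 ∨ ((k-1) * 2^t ≤ j - 1 ∧ j ≤ k * 2^t) := by
    set q := (k-1) * 2^t with hq
    have hr : k * 2^t = q + 2^t := by rw [hq]; ring
    omega
  rcases key with h | h | ⟨h1, h2⟩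
  · left
    rw [Set.Ioo_disjoint_Ioo]
    have : e x y (n+t) j ≤ e x y n (k-1) := by
      rw [e_le_e hxy, pow_add]
      nlinarith
    exact (min_le_right _ _).trans (this.trans (le_max_left _ _))
  · left
    rw [Set.Ioo_disjoint_Ioo]
    have : e x y n k ≤ e x y (n+t) (j-1) := by
      rw [e_le_e hxy, pow_add]
      nlinarith
    exact (min_le_left _ _).trans (this.trans (le_max_right _ _))
  · right; right
    rw [Set.Ioo_subset_Ioo_iff (e_self_lt hxy (by omega))]
    constructor
    · rw [e_le_e hxy, pow_add]; nlinarith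
    · rw [e_le_e hxy, pow_add]; nlinarith

end Stmt10Aux

/-- The family of dyadic open subintervals of `I = (x,y)` (cutting `I` into `2ⁿ` equal
pieces for each `n`) is pairwise noncrossing (any two members are disjoint or nested),
and it is maximal: any open subinterval of `(x,y)` noncrossing with all members already
belongs to the family. -/
theorem stmt10 (x y : ℝ) (hxy : x < y) :
    (∀ S ∈ {S : Set ℝ | ∃ n k : ℕ, 1 ≤ k ∧ k ≤ 2 ^ n ∧
        S = Set.Ioo (x + ((k : ℝ) - 1) * (y - x) / 2 ^ n) (x + (k : ℝ) * (y - x) / 2 ^ n)},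
      S ⊆ Set.Ioo x y) ∧
    (∀ S ∈ {S : Set ℝ | ∃ n k : ℕ, 1 ≤ k ∧ k ≤ 2 ^ n ∧
        S = Set.Ioo (x + ((k : ℝ) - 1) * (y - x) / 2 ^ n) (x + (k : ℝ) * (y - x) / 2 ^ n)},
      ∀ T ∈ {S : Set ℝ | ∃ n k : ℕ, 1 ≤ k ∧ k ≤ 2 ^ n ∧
        S = Set.Ioo (x + ((k : ℝ) - 1) * (y - x) / 2 ^ n) (x + (k : ℝ) * (y - x) / 2 ^ n)},
      Disjoint S T ∨ S ⊆ T ∨ T ⊆ S) ∧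
    (∀ a b : ℝ, x ≤ a → a < b → b ≤ y →
      (∀ S ∈ {S : Set ℝ | ∃ n k : ℕ, 1 ≤ k ∧ k ≤ 2 ^ n ∧
          S = Set.Ioo (x + ((k : ℝ) - 1) * (y - x) / 2 ^ n) (x + (k : ℝ) * (y - x) / 2 ^ n)},
        Disjoint (Set.Ioo a b) S ∨ Set.Ioo a b ⊆ S ∨ S ⊆ Set.Ioo a b) →
      Set.Ioo a b ∈ {S : Set ℝ | ∃ n k : ℕ, 1 ≤ k ∧ k ≤ 2 ^ n ∧
        S = Set.Ioo (x + ((k : ℝ) - 1) * (y - x) / 2 ^ n) (x + (k : ℝ) * (y - x) / 2 ^ n)}) := by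
  classical
  have hyx : (0:ℝ) < y - x := by linarith
  have form : ∀ (n : ℕ) (k : ℕ),
      Set.Ioo (x + ((k : ℝ) - 1) * (y - x) / 2 ^ n) (x + (k : ℝ) * (y - x) / 2 ^ n)
      = Set.Ioo (Stmt10Aux.e x y n ((k:ℤ) - 1)) (Stmt10Aux.e x y n (k:ℤ)) := by
    intro n k
    unfold Stmt10Aux.e
    congr 1 <;> push_cast <;> ring
  refine ⟨?_, ?_, ?_⟩
  · rintro S ⟨n, k, hk1, hk2, rfl⟩
    have hk1' : (1:ℝ) ≤ (k:ℝ) := by exact_mod_cast hk1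
    have hk2' : (k:ℝ) ≤ 2 ^ n := by exact_mod_cast hk2
    have h2n : (0:ℝ) < 2 ^ n := by positivity
    apply Set.Ioo_subset_Ioo
    · have : (0:ℝ) ≤ ((k:ℝ) - 1) * (y - x) / 2 ^ n :=
        div_nonneg (mul_nonneg (by linarith) hyx.le) h2n.le
      linarith
    · have : (k:ℝ) * (y - x) / 2 ^ n ≤ y - x := by
        rw [div_le_iff₀ h2n]
        nlinarith
      linarith
  · rintro S ⟨n, k, hk1, hk2, rfl⟩ T ⟨m, j, hj1, hj2, rfl⟩
    rw [form, form]
    rcases le_total n m with hnm | hmn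
    · exact Stmt10Aux.aux2 hxy hnm _ _
    · rcases Stmt10Aux.aux2 hxy hmn (j:ℤ) (k:ℤ) with h | h | h
      · exact Or.inl h.symm
      · exact Or.inr (Or.inr h)
      · exact Or.inr (Or.inl h)
  · intro a b hxa hab hby H
    have H' : ∀ (n : ℕ) (k : ℤ), 1 ≤ k → k ≤ 2 ^ n →
        Disjoint (Set.Ioo a b) (Set.Ioo (Stmt10Aux.e x y n (k-1)) (Stmt10Aux.e x y n k)) ∨
        Set.Ioo a b ⊆ Set.Ioo (Stmt10Aux.e x y n (k-1)) (Stmt10Aux.e x y n k) ∨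
        Set.Ioo (Stmt10Aux.e x y n (k-1)) (Stmt10Aux.e x y n k) ⊆ Set.Ioo a b := by
      intro n k h1 h2
      have h2' : ((2:ℤ)) ^ n = ((2 ^ n : ℕ) : ℤ) := by push_cast; ring
      have hk : ((k.toNat : ℕ) : ℤ) = k := Int.toNat_of_nonneg (by omega)
      have := H _ ⟨n, k.toNat, by omega, by omega, rfl⟩
      rwa [form, show ((k.toNat : ℕ) : ℤ) = k from hk] at this
    -- density: some dyadic point lies strictly inside (a,b)
    have hP : ∃ n : ℕ, ∃ m : ℤ, a < Stmt10Aux.e x y n m ∧ Stmt10Aux.e x y n m < b := by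
      obtain ⟨n, hn⟩ := pow_unbounded_of_one_lt ((y - x) / (b - a)) (by norm_num : (1:ℝ) < 2)
      have hn' : y - x < (b - a) * 2 ^ n := by
        rw [div_lt_iff₀ (by linarith : (0:ℝ) < b - a)] at hn
        linarith [hn]
      set t : ℝ := (a - x) * 2 ^ n / (y - x) with ht
      have htm : t * (y - x) = (a - x) * 2 ^ n := div_mul_cancel₀ _ (ne_of_gt hyx)
      refine ⟨n, ⌊t⌋ + 1, ?_, ?_⟩
      · rw [Stmt10Aux.lt_e_iff hxy]
        have h1 : t < (⌊t⌋ : ℝ) + 1 := Int.lt_floor_add_one t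
        have h3 : t * (y - x) < ((⌊t⌋ : ℝ) + 1) * (y - x) := by nlinarith
        push_cast
        nlinarith
      · rw [Stmt10Aux.e_lt_iff hxy]
        have h1 : (⌊t⌋ : ℝ) ≤ t := Int.floor_le t
        have h3 : (⌊t⌋ : ℝ) * (y - x) ≤ t * (y - x) := by nlinarith
        push_cast
        nlinarith
    set L := Nat.find hP with hL
    obtain ⟨m, ham, hmb⟩ := Nat.find_spec hP
    have hmin : ∀ n < L, ¬ (∃ m : ℤ, a < Stmt10Aux.e x y n m ∧ Stmt10Aux.e x y n m < b) :=
      fun n hn => Nat.find_min hP hn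
    have h2L : (0:ℝ) < 2 ^ L := by positivity
    have hm1 : 1 ≤ m := by
      by_contra hc
      push_neg at hc
      have hm0 : (m:ℝ) ≤ 0 := by exact_mod_cast (show m ≤ 0 by omega)
      have := (Stmt10Aux.lt_e_iff hxy).mp ham
      nlinarith
    have hm2 : m < 2 ^ L := by
      have h := (Stmt10Aux.e_lt_iff hxy).mp hmb
      have hmr : (m:ℝ) < 2 ^ L := by nlinarith
      exact_mod_cast hmr
    have hL1 : 1 ≤ L := by
      by_contra hc
      have : L = 0 := by omega
      rw [this] at hm2
      omega
    have hOdd : Odd m := by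
      rcases Int.even_or_odd m with he | ho
      · exfalso
        obtain ⟨m', hm'⟩ := he
        refine hmin (L-1) (by omega) ⟨m', ?_, ?_⟩
        · have heq : Stmt10Aux.e x y (L-1) m' = Stmt10Aux.e x y L m := by
            rw [← Stmt10Aux.e_double x y (L-1) m', show L-1+1 = L by omega,
              show 2 * m' = m by omega]
          rw [heq]; exact ham
        · have heq : Stmt10Aux.e x y (L-1) m' = Stmt10Aux.e x y L m := by
            rw [← Stmt10Aux.e_double x y (L-1) m', show L-1+1 = L by omega,
              show 2 * m' = m by omega]
          rw [heq]; exact hmb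
      · exact ho
    obtain ⟨t, hmt⟩ := hOdd
    have hlt1 : Stmt10Aux.e x y L (m-1) < Stmt10Aux.e x y L m := Stmt10Aux.e_self_lt hxy (by omega)
    have hlt2 : Stmt10Aux.e x y L m < Stmt10Aux.e x y L (m+1) := Stmt10Aux.e_self_lt hxy (by omega)
    -- left interval J₁ = (e L (m-1), e L m)
    have hJ1 : a = Stmt10Aux.e x y L (m-1) := by
      rcases H' L m hm1 (by omega) with hd | hs | hs
      · exfalso
        rw [Set.Ioo_disjoint_Ioo] at hd
        have h1 : Stmt10Aux.e x y L m ≤ max a (Stmt10Aux.e x y L (m-1)) :=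
          le_trans (le_min hmb.le le_rfl) hd
        have h2 : max a (Stmt10Aux.e x y L (m-1)) < Stmt10Aux.e x y L m := max_lt ham hlt1
        linarith
      · exfalso
        obtain ⟨_, h2⟩ := (Set.Ioo_subset_Ioo_iff hab).mp hs
        linarith
      · obtain ⟨ha', _⟩ := (Set.Ioo_subset_Ioo_iff hlt1).mp hs
        have hle : Stmt10Aux.e x y L (m-1) ≤ a := by
          by_contra hc
          push_neg at hc
          refine hmin (L-1) (by omega) ⟨t, ?_, ?_⟩
          · rw [show Stmt10Aux.e x y (L-1) t = Stmt10Aux.e x y L (m-1) by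
              rw [← Stmt10Aux.e_double x y (L-1) t, show L-1+1 = L by omega,
                show 2 * t = m - 1 by omega]]
            exact hc
          · rw [show Stmt10Aux.e x y (L-1) t = Stmt10Aux.e x y L (m-1) by
              rw [← Stmt10Aux.e_double x y (L-1) t, show L-1+1 = L by omega,
                show 2 * t = m - 1 by omega]]
            linarith
        linarith
    -- right interval J₂ = (e L m, e L (m+1))
    have hJ2 : b = Stmt10Aux.e x y L (m+1) := by
      have h := H' L (m+1) (by omega) (by omega)
      rw [show m + 1 - 1 = m by ring] at h
      rcases h with hd | hs | hs
      · exfalso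
        rw [Set.Ioo_disjoint_Ioo] at hd
        have h1 : min b (Stmt10Aux.e x y L (m+1)) ≤ Stmt10Aux.e x y L m :=
          le_trans hd (max_le ham.le le_rfl)
        have h2 : Stmt10Aux.e x y L m < min b (Stmt10Aux.e x y L (m+1)) := lt_min hmb hlt2
        linarith
      · exfalso
        obtain ⟨h1, _⟩ := (Set.Ioo_subset_Ioo_iff hab).mp hs
        linarith
      · obtain ⟨_, hb'⟩ := (Set.Ioo_subset_Ioo_iff hlt2).mp hs
        have hle : b ≤ Stmt10Aux.e x y L (m+1) := by
          by_contra hc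
          push_neg at hc
          refine hmin (L-1) (by omega) ⟨t + 1, ?_, ?_⟩
          · rw [show Stmt10Aux.e x y (L-1) (t+1) = Stmt10Aux.e x y L (m+1) by
              rw [← Stmt10Aux.e_double x y (L-1) (t+1), show L-1+1 = L by omega,
                show 2 * (t+1) = m + 1 by omega]]
            linarith
          · rw [show Stmt10Aux.e x y (L-1) (t+1) = Stmt10Aux.e x y L (m+1) by
              rw [← Stmt10Aux.e_double x y (L-1) (t+1), show L-1+1 = L by omega,
                show 2 * (t+1) = m + 1 by omega]]
            exact hc
        linarith
    -- conclude
    have ht0 : 0 ≤ t := by omega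
    have h2Lsplit : (2:ℤ) ^ L = 2 * 2 ^ (L-1) := by
      rw [← pow_succ']
      congr 1
      omega
    have htb : t + 1 ≤ 2 ^ (L-1) := by omega
    refine ⟨L - 1, (t+1).toNat, by omega, ?_, ?_⟩
    · have hcast : ((2 ^ (L-1) : ℕ) : ℤ) = 2 ^ (L-1) := by push_cast; ring
      omega
    · have hcast : ((t+1).toNat : ℝ) = (t : ℝ) + 1 := by
        rw [← Int.cast_natCast, Int.toNat_of_nonneg (by omega)]
        push_cast; ring
      rw [hJ1, hJ2, hcast]
      have e1 : Stmt10Aux.e x y L (m-1) = x + ((t:ℝ) + 1 - 1) * (y - x) / 2 ^ (L-1) := by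
        rw [show Stmt10Aux.e x y L (m-1) = Stmt10Aux.e x y (L-1) t by
          rw [← Stmt10Aux.e_double x y (L-1) t, show L-1+1 = L by omega,
            show 2 * t = m - 1 by omega]]
        unfold Stmt10Aux.e
        push_cast; ring
      have e2 : Stmt10Aux.e x y L (m+1) = x + ((t:ℝ) + 1) * (y - x) / 2 ^ (L-1) := by
        rw [show Stmt10Aux.e x y L (m+1) = Stmt10Aux.e x y (L-1) (t+1) by
          rw [← Stmt10Aux.e_double x y (L-1) (t+1), show L-1+1 = L by omega,
            show 2 * (t+1) = m + 1 by omega]]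
        unfold Stmt10Aux.e
        push_cast; ring
      rw [e1, e2]
end

section
/- Let L be a family of open subintervals of I = (x,y) ⊂ ℝ which is pairwise noncrossing (disjoint or nested), maximal with this property among subintervals of I, contains I itself, and is discrete in the sense that for every δ > 0 only finitely many members of L have length ≥ δ. Then there is a unique z with x < z < y such that every member of L other than I is contained in (x,z) or in (z,y), and L ∖ {I} is the disjoint union of a maximal noncrossing discrete family on (x,z) and one on (z,y). -/
/-- Two open intervals (given by their endpoint pairs) are noncrossing if they are
disjoint or one contains the other. -/
def Noncross (p q : ℝ × ℝ) : Prop :=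
  Disjoint (Set.Ioo p.1 p.2) (Set.Ioo q.1 q.2) ∨
  Set.Ioo p.1 p.2 ⊆ Set.Ioo q.1 q.2 ∨ Set.Ioo q.1 q.2 ⊆ Set.Ioo p.1 p.2

/-- `Fam x y L`: `L` is a family of open subintervals of `(x,y)` (encoded by endpoint
pairs), pairwise noncrossing, maximal with this property among subintervals of `(x,y)`,
and discrete (only finitely many members of length `≥ δ` for every `δ > 0`). -/
def Fam (x y : ℝ) (L : Set (ℝ × ℝ)) : Prop :=
  (∀ p ∈ L, x ≤ p.1 ∧ p.1 < p.2 ∧ p.2 ≤ y) ∧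
  (∀ p ∈ L, ∀ q ∈ L, Noncross p q) ∧
  (∀ a b : ℝ, x ≤ a → a < b → b ≤ y → (∀ p ∈ L, Noncross (a, b) p) → (a, b) ∈ L) ∧
  (∀ δ > (0 : ℝ), {p : ℝ × ℝ | p ∈ L ∧ δ ≤ p.2 - p.1}.Finite)

lemma noncross_iff {p q : ℝ × ℝ} (h1 : p.1 < p.2) (h2 : q.1 < q.2) :
    Noncross p q ↔
      (p.2 ≤ q.1 ∨ q.2 ≤ p.1) ∨ (q.1 ≤ p.1 ∧ p.2 ≤ q.2) ∨ (p.1 ≤ q.1 ∧ q.2 ≤ p.2) := by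
  unfold Noncross
  rw [Set.Ioo_disjoint_Ioo, Set.Ioo_subset_Ioo_iff h1, Set.Ioo_subset_Ioo_iff h2,
    min_le_iff, le_max_iff, le_max_iff]
  constructor
  · rintro (((h | h) | (h | h)) | h)
    · exact absurd h (not_le.2 h1)
    · exact Or.inl (Or.inl h)
    · exact Or.inl (Or.inr h)
    · exact absurd h (not_le.2 h2)
    · exact Or.inr h
  · rintro ((h | h) | h)
    · exact Or.inl (Or.inl (Or.inr h))
    · exact Or.inl (Or.inr (Or.inl h))
    · exact Or.inr h

lemma noncross_mk {a b c d : ℝ} (hab : a < b) (hcd : c < d)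
    (h : (b ≤ c ∨ d ≤ a) ∨ (c ≤ a ∧ b ≤ d) ∨ (a ≤ c ∧ d ≤ b)) :
    Noncross (a, b) (c, d) :=
  (noncross_iff (p := (a, b)) (q := (c, d)) hab hcd).2 h

/-- A discrete maximal noncrossing family `L` on `I = (x,y)` containing `I` splits at a
unique point `z ∈ (x,y)`: every member other than `I` lies in `(x,z)` or `(z,y)`, and
`L ∖ {I}` is the disjoint union of a discrete maximal noncrossing family on `(x,z)` and
one on `(z,y)`. -/
theorem stmt11 (x y : ℝ) (hxy : x < y) (L : Set (ℝ × ℝ))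
    (hL : Fam x y L) (hI : (x, y) ∈ L) :
    ∃! z : ℝ, x < z ∧ z < y ∧
      Fam x z {p ∈ L | Set.Ioo p.1 p.2 ⊆ Set.Ioo x z} ∧
      Fam z y {p ∈ L | Set.Ioo p.1 p.2 ⊆ Set.Ioo z y} ∧
      ∀ p ∈ L, p ≠ (x, y) →
        Set.Ioo p.1 p.2 ⊆ Set.Ioo x z ∨ Set.Ioo p.1 p.2 ⊆ Set.Ioo z y := by
  obtain ⟨hbd, hnc, hmax, hfin⟩ := hL
  have hlt : ∀ p ∈ L, p.1 < p.2 := fun p hp => (hbd p hp).2.1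
  have hnc' : ∀ p ∈ L, ∀ q ∈ L,
      (p.2 ≤ q.1 ∨ q.2 ≤ p.1) ∨ (q.1 ≤ p.1 ∧ p.2 ≤ q.2) ∨ (p.1 ≤ q.1 ∧ q.2 ≤ p.2) :=
    fun p hp q hq => (noncross_iff (hlt p hp) (hlt q hq)).1 (hnc p hp q hq)
  -- every proper member is contained in a maximal proper member ("child")
  have hchild : ∀ p ∈ L, p ≠ (x, y) → ∃ q, q ∈ L ∧ q ≠ (x, y) ∧ q.1 ≤ p.1 ∧ p.2 ≤ q.2 ∧
      ∀ r ∈ L, r ≠ (x, y) → r.1 ≤ q.1 → q.2 ≤ r.2 → r = q := by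
    intro p hp hpI
    have hδ : (0 : ℝ) < p.2 - p.1 := sub_pos.2 (hlt p hp)
    have hTfin : {r : ℝ × ℝ | r ∈ L ∧ r ≠ (x, y) ∧ r.1 ≤ p.1 ∧ p.2 ≤ r.2}.Finite := by
      refine (hfin _ hδ).subset ?_
      rintro r ⟨h1, _, h3, h4⟩
      exact ⟨h1, by linarith⟩
    have hTne : {r : ℝ × ℝ | r ∈ L ∧ r ≠ (x, y) ∧ r.1 ≤ p.1 ∧ p.2 ≤ r.2}.Nonempty :=
      ⟨p, hp, hpI, le_refl _, le_refl _⟩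
    obtain ⟨q, hqT, hqmax⟩ := Set.Finite.exists_maximalFor (fun r => r.2 - r.1) _ hTfin hTne
    refine ⟨q, hqT.1, hqT.2.1, hqT.2.2.1, hqT.2.2.2, ?_⟩
    intro r hr hrI hr1 hr2
    have hrT : r ∈ {r : ℝ × ℝ | r ∈ L ∧ r ≠ (x, y) ∧ r.1 ≤ p.1 ∧ p.2 ≤ r.2} :=
      ⟨hr, hrI, le_trans hr1 hqT.2.2.1, le_trans hqT.2.2.2 hr2⟩
    have heq := hqmax (j := r) hrT (by simp only; linarith)
    have e1 : r.1 = q.1 := by linarith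
    have e2 : r.2 = q.2 := by linarith
    exact Prod.ext e1 e2
  -- existence of a proper member
  have hproper : ∃ p, p ∈ L ∧ p ≠ (x, y) := by
    by_contra h
    push_neg at h
    have hm : (x, (x + y) / 2) ∈ L := by
      refine hmax x ((x + y) / 2) le_rfl (by linarith) (by linarith) ?_
      intro r hr
      have := h r hr
      subst this
      exact noncross_mk (by linarith) hxy (Or.inr (Or.inl ⟨le_rfl, by linarith⟩))
    have := h _ hm
    rw [Prod.ext_iff] at this
    simp only at this
    linarith [this.2]
  -- there is a child whose right endpoint is y
  have hcr : ∃ c, c ∈ L ∧ c ≠ (x, y) ∧ c.2 = y ∧ x < c.1 ∧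
      ∀ r ∈ L, r ≠ (x, y) → r.1 ≤ c.1 → c.2 ≤ r.2 → r = c := by
    obtain ⟨p, hp, hpI⟩ := hproper
    obtain ⟨c, hc, hcI, _, _, hcmax⟩ := hchild p hp hpI
    have hcb := hbd c hc
    have hclt := hlt c hc
    by_cases hc2 : c.2 = y
    · have hc1 : x < c.1 := by
        rcases lt_or_eq_of_le hcb.1 with h | h
        · exact h
        · exact absurd (Prod.ext h.symm hc2) hcI
      exact ⟨c, hc, hcI, hc2, hc1, hcmax⟩
    · have hc2' : c.2 < y := lt_of_le_of_ne hcb.2.2 hc2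
      have hc2x : x < c.2 := lt_of_le_of_lt hcb.1 hclt
      have hmem : (c.2, y) ∈ L := by
        refine hmax c.2 y (by linarith) hc2' le_rfl ?_
        intro r hr
        refine noncross_mk hc2' (hlt r hr) ?_
        by_cases hrI : r = (x, y)
        · subst hrI
          exact Or.inr (Or.inl ⟨by linarith, le_rfl⟩)
        rcases hnc' c hc r hr with (h | h) | h | h
        · exact Or.inr (Or.inr ⟨h, (hbd r hr).2.2⟩)
        · exact Or.inl (Or.inr (by linarith))
        · have := hcmax r hr hrI h.1 h.2
          exact Or.inl (Or.inr (le_of_eq (congrArg Prod.snd this)))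
        · exact Or.inl (Or.inr h.2)
      have hmemI : ((c.2, y) : ℝ × ℝ) ≠ (x, y) := by
        simp only [ne_eq, Prod.mk.injEq, not_and]
        intro h _
        linarith
      obtain ⟨c', hc', hcI', h1', h2', hcmax'⟩ := hchild _ hmem hmemI
      simp only at h1' h2'
      have hc'2 : c'.2 = y := le_antisymm (hbd c' hc').2.2 h2'
      have hc'1 : x < c'.1 := by
        rcases lt_or_eq_of_le (hbd c' hc').1 with h | h
        · exact h
        · exact absurd (Prod.ext h.symm hc'2) hcI'
      exact ⟨c', hc', hcI', hc'2, hc'1, hcmax'⟩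
  obtain ⟨c, hc, hcI, hc2, hc1, hcmax⟩ := hcr
  set z := c.1 with hz
  have hclt := hlt c hc
  have hzy : z < y := by rw [← hc2]; exact hclt
  -- splitting of all proper members at z
  have hsplit : ∀ r ∈ L, r ≠ (x, y) → r.2 ≤ z ∨ z ≤ r.1 := by
    intro r hr hrI
    rcases hnc' r hr c hc with (h | h) | h | h
    · exact Or.inl h
    · exact Or.inr (by linarith [hlt r hr, (hbd r hr).2.2])
    · exact Or.inr h.1
    · have := hcmax r hr hrI h.1 h.2
      exact Or.inr (le_of_eq (congrArg Prod.fst this).symm)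
  -- (x, z) is a member
  have hxz : (x, z) ∈ L := by
    refine hmax x z le_rfl hc1 (by linarith) ?_
    intro r hr
    refine noncross_mk hc1 (hlt r hr) ?_
    by_cases hrI : r = (x, y)
    · subst hrI
      exact Or.inr (Or.inl ⟨le_rfl, by linarith⟩)
    rcases hsplit r hr hrI with h | h
    · exact Or.inr (Or.inr ⟨(hbd r hr).1, h⟩)
    · exact Or.inl (Or.inl h)
  have hzyL : (z, y) ∈ L := by
    have : ((z, y) : ℝ × ℝ) = c := Prod.ext rfl hc2.symm
    rw [this]; exact hc
  -- Ioo-form of splitting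
  have hsplit' : ∀ p ∈ L, p ≠ (x, y) →
      Set.Ioo p.1 p.2 ⊆ Set.Ioo x z ∨ Set.Ioo p.1 p.2 ⊆ Set.Ioo z y := by
    intro p hp hpI
    rcases hsplit p hp hpI with h | h
    · exact Or.inl ((Set.Ioo_subset_Ioo_iff (hlt p hp)).2 ⟨(hbd p hp).1, h⟩)
    · exact Or.inr ((Set.Ioo_subset_Ioo_iff (hlt p hp)).2 ⟨h, (hbd p hp).2.2⟩)
  -- the two subfamilies
  have hFam1 : Fam x z {p ∈ L | Set.Ioo p.1 p.2 ⊆ Set.Ioo x z} := by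
    refine ⟨?_, ?_, ?_, ?_⟩
    · rintro p ⟨hp, hsub⟩
      rw [Set.Ioo_subset_Ioo_iff (hlt p hp)] at hsub
      exact ⟨hsub.1, hlt p hp, hsub.2⟩
    · rintro p ⟨hp, _⟩ q ⟨hq, _⟩
      exact hnc p hp q hq
    · intro a b ha hab hb h
      have habL : (a, b) ∈ L := by
        refine hmax a b ha hab (by linarith) ?_
        intro r hr
        by_cases hrI : r = (x, y)
        · subst hrI
          exact noncross_mk hab hxy (Or.inr (Or.inl ⟨ha, by linarith⟩))
        rcases hsplit r hr hrI with hcase | hcase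
        · exact h r ⟨hr, (Set.Ioo_subset_Ioo_iff (hlt r hr)).2 ⟨(hbd r hr).1, hcase⟩⟩
        · exact noncross_mk hab (hlt r hr) (Or.inl (Or.inl (by linarith)))
      exact ⟨habL, (Set.Ioo_subset_Ioo_iff hab).2 ⟨ha, hb⟩⟩
    · intro δ hδ
      refine (hfin δ hδ).subset ?_
      rintro r ⟨⟨h1, _⟩, h2⟩
      exact ⟨h1, h2⟩
  have hFam2 : Fam z y {p ∈ L | Set.Ioo p.1 p.2 ⊆ Set.Ioo z y} := by
    refine ⟨?_, ?_, ?_, ?_⟩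
    · rintro p ⟨hp, hsub⟩
      rw [Set.Ioo_subset_Ioo_iff (hlt p hp)] at hsub
      exact ⟨hsub.1, hlt p hp, hsub.2⟩
    · rintro p ⟨hp, _⟩ q ⟨hq, _⟩
      exact hnc p hp q hq
    · intro a b ha hab hb h
      have habL : (a, b) ∈ L := by
        refine hmax a b (by linarith) hab hb ?_
        intro r hr
        by_cases hrI : r = (x, y)
        · subst hrI
          exact noncross_mk hab hxy (Or.inr (Or.inl ⟨by linarith, hb⟩))
        rcases hsplit r hr hrI with hcase | hcase
        · exact noncross_mk hab (hlt r hr) (Or.inl (Or.inr (by linarith)))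
        · exact h r ⟨hr, (Set.Ioo_subset_Ioo_iff (hlt r hr)).2 ⟨hcase, (hbd r hr).2.2⟩⟩
      exact ⟨habL, (Set.Ioo_subset_Ioo_iff hab).2 ⟨ha, hb⟩⟩
    · intro δ hδ
      refine (hfin δ hδ).subset ?_
      rintro r ⟨⟨h1, _⟩, h2⟩
      exact ⟨h1, h2⟩
  refine ⟨z, ⟨hc1, hzy, hFam1, hFam2, hsplit'⟩, ?_⟩
  -- uniqueness
  rintro z' ⟨hz'1, hz'2, _, _, hsp'⟩
  have hne1 : ((x, z) : ℝ × ℝ) ≠ (x, y) := by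
    simp only [ne_eq, Prod.mk.injEq, not_and]
    intro _ h
    linarith
  have hne2 : ((z, y) : ℝ × ℝ) ≠ (x, y) := by
    simp only [ne_eq, Prod.mk.injEq, not_and]
    intro h _
    linarith
  have h1 := hsp' (x, z) hxz hne1
  have h2 := hsp' (z, y) hzyL hne2
  simp only at h1 h2
  rw [Set.Ioo_subset_Ioo_iff hc1, Set.Ioo_subset_Ioo_iff hc1] at h1
  rw [Set.Ioo_subset_Ioo_iff hzy, Set.Ioo_subset_Ioo_iff hzy] at h2
  rcases h1 with h1 | h1
  · rcases h2 with h2 | h2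
    · linarith [h2.2]
    · linarith [h1.2, h2.1]
  · linarith [h1.1]
end

section
/- Let L be a discrete maximal noncrossing family of open subintervals of I = (x,y) (containing I), with an element X₁ ≠ I of maximal length among members of L other than I. Then X₁ = (x,z) or X₁ = (z,y) for some x < z < y. -/
/-- In a discrete maximal noncrossing family on `(x,y)` containing `(x,y)`, an element
`X₁ = (a,b) ≠ (x,y)` of maximal length among the members other than `(x,y)` must be of
the form `(x,z)` or `(z,y)` for some `x < z < y`. -/
theorem stmt12 (x y : ℝ) (L : Set (ℝ × ℝ)) (hL : Fam x y L) (hI : (x, y) ∈ L)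
    (a b : ℝ) (hmem : (a, b) ∈ L) (hne : (a, b) ≠ (x, y))
    (hmax : ∀ p ∈ L, p ≠ (x, y) → p.2 - p.1 ≤ b - a) :
    (a = x ∧ x < b ∧ b < y) ∨ (b = y ∧ x < a ∧ a < y) := by
  obtain ⟨hbound, hpair, hmaxfam, _⟩ := hL
  obtain ⟨hxa, hab, hby⟩ := hbound _ hmem
  rcases eq_or_lt_of_le hxa with hax | hax
  · left
    refine ⟨hax.symm, hax ▸ hab, ?_⟩
    rcases lt_or_eq_of_le hby with h | h
    · exact h
    · exact absurd (Prod.ext_iff.mpr ⟨hax.symm, h⟩) hne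
  · rcases lt_or_eq_of_le hby with hb | hb
    · exfalso
      have hxb : x < b := lt_trans hax hab
      by_cases hnc : ∀ p ∈ L, Noncross (x, b) p
      · have hmemxb := hmaxfam x b le_rfl hxb (le_of_lt hb) hnc
        have := hmax _ hmemxb (fun h => absurd (congrArg Prod.snd h) (ne_of_lt hb))
        simp only at this
        linarith
      · push_neg at hnc
        obtain ⟨p, hpL, hcross⟩ := hnc
        obtain ⟨hxp1, hp12, hp2y⟩ := hbound p hpL
        simp only [Noncross, not_or] at hcross
        obtain ⟨hnd, hns1, hns2⟩ := hcross
        rw [Set.not_disjoint_iff] at hnd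
        obtain ⟨t, ht1, ht2⟩ := hnd
        simp only [Set.mem_Ioo] at ht1 ht2
        have hp1b : p.1 < b := lt_trans ht2.1 ht1.2
        have hbp2 : b < p.2 := by
          by_contra h; push_neg at h
          exact hns2 (Set.Ioo_subset_Ioo hxp1 h)
        have hxp1' : x < p.1 := by
          by_contra h; push_neg at h
          exact hns1 (Set.Ioo_subset_Ioo h (le_of_lt hbp2))
        rcases hpair _ hmem _ hpL with hd | hs | hs
        · rw [Set.Ioo_disjoint_Ioo] at hd
          simp only [min_le_iff, le_max_iff] at hd
          rcases hd with h | h <;> rcases h with h | h <;> linarith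
        · rw [Set.Ioo_subset_Ioo_iff hab] at hs
          have hpne : p ≠ (x, y) := by
            intro h; rw [h] at hxp1'; exact lt_irrefl x hxp1'
          have := hmax p hpL hpne
          linarith [hs.1, hs.2]
        · rw [Set.Ioo_subset_Ioo_iff hp12] at hs
          linarith [hs.2]
    · right
      exact ⟨hb, hax, hb ▸ hab⟩
end
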